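/- For every real numbers a, b ≥ 0 and every p > 1, |a^p − b^p| ≤ c_p · |a − b| · (a^(p−1) + b^(p−1)), where c_p := max(p/2, 1). -/

import Mathlib

open Real Set

/-- Tangent line bound for convex `x ^ q`, `q ≥ 1`: `a^q - b^q ≤ q a^(q-1) (a-b)`. -/
lemma rpow_tangent {q b a : ℝ} (hq : 1 ≤ q) (hb : 0 ≤ b) (hab : b ≤ a) :
    a ^ q - b ^ q ≤ q * a ^ (q - 1) * (a - b) := by
  rcases eq_or_lt_of_le (hb.trans hab) with h0 | ha
  · have hb0 : b = 0 := le_antisymm (hab.trans h0.ge) hb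
    simp [← h0, hb0, Real.zero_rpow (by positivity : q ≠ 0)]
  · set s : ℝ := (b - a) / a with hs_def
    have hs : -1 ≤ s := by
      rw [hs_def, sub_div, div_self ha.ne']
      have : 0 ≤ b / a := div_nonneg hb ha.le
      linarith
    have hbern := one_add_mul_self_le_rpow_one_add hs hq
    have h1s : 1 + s = b / a := by rw [hs_def, sub_div, div_self ha.ne']; ring
    have hpow : (1 + s) ^ q = b ^ q / a ^ q := by
      rw [h1s, Real.div_rpow hb ha.le]
    rw [hpow] at hbern
    have haq : (0:ℝ) < a ^ q := Real.rpow_pos_of_pos ha q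
    have hmul := mul_le_mul_of_nonneg_left hbern haq.le
    rw [mul_div_cancel₀ _ haq.ne'] at hmul
    have hkey : a ^ q * (1 + q * s) = a ^ q + q * a ^ (q - 1) * (b - a) := by
      have : a ^ (q - 1) = a ^ q / a := by
        rw [Real.rpow_sub ha, Real.rpow_one]
      rw [this, hs_def]
      field_simp
    rw [hkey] at hmul
    linarith

/-- Main inequality for `b ≤ a`. -/
lemma key_ineq (a b p : ℝ) (hb : 0 ≤ b) (hab : b ≤ a) (hp : 1 < p) :
    a ^ p - b ^ p ≤ max (p / 2) 1 * (a - b) * (a ^ (p - 1) + b ^ (p - 1)) := by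
  have ha : 0 ≤ a := hb.trans hab
  have hea : a ^ p = a * a ^ (p - 1) := by
    rw [← Real.rpow_one_add' ha (by linarith)]
    ring_nf
  have heb : b ^ p = b * b ^ (p - 1) := by
    rw [← Real.rpow_one_add' hb (by linarith)]
    ring_nf
  rcases le_total p 2 with h2 | h2
  · -- case 1 < p ≤ 2 : constant 1
    rw [max_eq_right (by linarith : p / 2 ≤ 1)]
    have hcross : b * a ^ (p - 1) ≤ a * b ^ (p - 1) := by
      rcases eq_or_lt_of_le hb with hb0 | hb0
      · rw [← hb0]
        have : (0:ℝ) ^ (p - 1) = 0 := Real.zero_rpow (by linarith)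
        simp [this]
      · have ha0 : 0 < a := lt_of_lt_of_le hb0 hab
        have e1 : b ^ (2 - p) * b ^ (p - 1) = b := by
          rw [← Real.rpow_add hb0]; norm_num
        have e2 : a ^ (2 - p) * a ^ (p - 1) = a := by
          rw [← Real.rpow_add ha0]; norm_num
        have h3 : b ^ (2 - p) ≤ a ^ (2 - p) :=
          Real.rpow_le_rpow hb hab (by linarith)
        calc b * a ^ (p - 1) = b ^ (2 - p) * b ^ (p - 1) * a ^ (p - 1) := by rw [e1]
          _ = b ^ (2 - p) * (b ^ (p - 1) * a ^ (p - 1)) := by ring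
          _ ≤ a ^ (2 - p) * (b ^ (p - 1) * a ^ (p - 1)) := by
              apply mul_le_mul_of_nonneg_right h3
              exact mul_nonneg (Real.rpow_nonneg hb _) (Real.rpow_nonneg ha _)
          _ = a ^ (2 - p) * a ^ (p - 1) * b ^ (p - 1) := by ring
          _ = a * b ^ (p - 1) := by rw [e2]
    nlinarith [hcross]
  · -- case 2 ≤ p : constant p/2
    rw [max_eq_left (by linarith : 1 ≤ p / 2)]
    set f : ℝ → ℝ := fun x => p / 2 * ((x - b) * (x ^ (p - 1) + b ^ (p - 1))) - x ^ p with hf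
    set g : ℝ → ℝ := fun x =>
      p / 2 * (1 * (x ^ (p - 1) + b ^ (p - 1)) + (x - b) * ((p - 1) * x ^ (p - 1 - 1)))
        - p * x ^ (p - 1) with hg
    have hder : ∀ x : ℝ, HasDerivAt f (g x) x := by
      intro x
      have h1 : HasDerivAt (fun x : ℝ => x ^ p) (p * x ^ (p - 1)) x :=
        Real.hasDerivAt_rpow_const (Or.inr (by linarith))
      have h2 : HasDerivAt (fun x : ℝ => x ^ (p - 1)) ((p - 1) * x ^ (p - 1 - 1)) x :=
        Real.hasDerivAt_rpow_const (Or.inr (by linarith))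
      have h3 : HasDerivAt (fun x : ℝ => (x - b) * (x ^ (p - 1) + b ^ (p - 1)))
          (1 * (x ^ (p - 1) + b ^ (p - 1)) + (x - b) * ((p - 1) * x ^ (p - 1 - 1))) x :=
        ((hasDerivAt_id x).sub_const b).mul (h2.add_const _)
      exact (h3.const_mul (p / 2)).sub h1
    have hg0 : ∀ x ∈ interior (Ici b), 0 ≤ g x := by
      intro x hx
      rw [interior_Ici] at hx
      have hbx : b ≤ x := le_of_lt hx
      have htan := rpow_tangent (q := p - 1) (by linarith) hb hbx
      have hp2 : (0:ℝ) ≤ p / 2 := by linarith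
      have := mul_le_mul_of_nonneg_left htan hp2
      simp only [hg]
      nlinarith [this]
    have hmono : MonotoneOn f (Ici b) :=
      monotoneOn_of_hasDerivWithinAt_nonneg (convex_Ici b)
        (fun x _ => (hder x).continuousAt.continuousWithinAt)
        (fun x hx => (hder x).hasDerivWithinAt) hg0
    have hfb : f b = -b ^ p := by simp [hf]
    have hfa := hmono (self_mem_Ici) (mem_Ici.mpr hab) hab
    rw [hfb] at hfa
    simp only [hf] at hfa
    nlinarith [hfa]

theorem abs_rpow_sub_rpow_le (a b p : ℝ) (ha : 0 ≤ a) (hb : 0 ≤ b) (hp : 1 < p) :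
    |a ^ p - b ^ p| ≤ max (p / 2) 1 * |a - b| * (a ^ (p - 1) + b ^ (p - 1)) := by
  rcases le_total b a with hab | hab
  · have h1 : b ^ p ≤ a ^ p := Real.rpow_le_rpow hb hab (by linarith)
    rw [abs_of_nonneg (by linarith), abs_of_nonneg (by linarith)]
    exact key_ineq a b p hb hab hp
  · have h1 : a ^ p ≤ b ^ p := Real.rpow_le_rpow ha hab (by linarith)
    rw [abs_of_nonpos (by linarith), abs_of_nonpos (by linarith), neg_sub, neg_sub, add_comm]
    exact key_ineq b a p ha hab hp
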